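/- Let E, F be real Banach spaces, T > 0, q ∈ (1,∞), and let f : E × ℝ → F be continuous, satisfy the local Lipschitz condition uniformly in the second variable, have the linear growth bound ‖f(e,x)‖_F ≤ M(1 + ‖e‖_E + |x|) for some M > 0, and be directionally differentiable at every point of E × ℝ in every direction of E × ℝ. Then the Nemytskii operator F̃ : C([0,T];E) × L^q((0,T);ℝ) → L^q((0,T);F), F̃(y,v)(t) = f(y(t),v(t)), is well defined and Hadamard directionally differentiable at every (y,v), with derivative given pointwise by F̃'[(y,v);(h,l)](t) = f'[(y(t),v(t));(h(t),l(t))]; moreover, for each fixed (y,v) the map (h,l) ↦ F̃'[(y,v);(h,l)] is Lipschitz continuous from C([0,T];E) × L^q((0,T);ℝ) to L^q((0,T);F). -/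

import Mathlib

open Set MeasureTheory Filter Topology
open scoped ENNReal NNReal

/-- `g` is directionally differentiable at `x` in direction `h` with derivative `d`:
`(g(x+λh) − g(x))/λ → d` as `λ → 0⁺`. -/
def DirDerivAt {X Y : Type*} [NormedAddCommGroup X] [NormedSpace ℝ X]
    [NormedAddCommGroup Y] [NormedSpace ℝ Y] (g : X → Y) (x h : X) (d : Y) : Prop :=
  Tendsto (fun lam : ℝ => lam⁻¹ • (g (x + lam • h) - g x)) (𝓝[>] (0 : ℝ)) (𝓝 d)

/-- `g` is Hadamard directionally differentiable at `x` in direction `h` with derivative `d`. -/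
def HadamardDerivAt {X Y : Type*} [NormedAddCommGroup X] [NormedSpace ℝ X]
    [NormedAddCommGroup Y] [NormedSpace ℝ Y] (g : X → Y) (x h : X) (d : Y) : Prop :=
  DirDerivAt g x h d ∧
    ∀ r : ℝ → X, Tendsto (fun lam : ℝ => lam⁻¹ • r lam) (𝓝[>] (0 : ℝ)) (𝓝 (0 : X)) →
      Tendsto (fun lam : ℝ => lam⁻¹ • (g (x + lam • h + r lam) - g x)) (𝓝[>] (0 : ℝ)) (𝓝 d)

/-- Dominated convergence for `eLpNorm` along a sequence. -/
lemma nem_dct {α G : Type*} [MeasurableSpace α] {μ : Measure α} [NormedAddCommGroup G]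
    {q : ℝ≥0∞} (hq0 : q ≠ 0) (hqtop : q ≠ ⊤)
    {fn : ℕ → α → G} {g : α → G} {bound : α → ℝ}
    (hfn : ∀ n, AEStronglyMeasurable (fn n) μ)
    (hbound : MemLp bound q μ)
    (hb : ∀ n, ∀ᵐ x ∂μ, ‖fn n x‖ ≤ bound x)
    (hlim : ∀ᵐ x ∂μ, Tendsto (fun n => fn n x) atTop (𝓝 (g x))) :
    Tendsto (fun n => eLpNorm (fun x => fn n x - g x) q μ) atTop (𝓝 0) := by
  have hg : AEStronglyMeasurable g μ := aestronglyMeasurable_of_tendsto_ae _ hfn hlim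
  have hqr : 0 < q.toReal := ENNReal.toReal_pos hq0 hqtop
  have hgb : ∀ᵐ x ∂μ, ‖g x‖ ≤ bound x := by
    filter_upwards [ae_all_iff.2 hb, hlim] with x hx hlx
    exact le_of_tendsto (hlx.norm) (Eventually.of_forall hx)
  have key : Tendsto (fun n => ∫⁻ x, (‖fn n x - g x‖₊ : ℝ≥0∞) ^ q.toReal ∂μ) atTop (𝓝 0) := by
    have h0 : (0 : ℝ≥0∞) = ∫⁻ _x, (0 : ℝ≥0∞) ∂μ := by simp
    rw [h0]
    refine tendsto_lintegral_of_dominated_convergence'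
      (fun x => (‖2 * bound x‖₊ : ℝ≥0∞) ^ q.toReal) (fun n => ?_) (fun n => ?_) ?_ ?_
    · exact (((hfn n).sub hg).enorm).pow_const _
    · filter_upwards [hb n, hgb] with x h1 h2
      refine ENNReal.rpow_le_rpow ?_ hqr.le
      have : ‖fn n x - g x‖ ≤ ‖2 * bound x‖ := by
        calc ‖fn n x - g x‖ ≤ ‖fn n x‖ + ‖g x‖ := norm_sub_le _ _
        _ ≤ 2 * bound x := by linarith
        _ ≤ ‖2 * bound x‖ := le_abs_self _
      exact_mod_cast this
    · have : MemLp (fun x => 2 * bound x) q μ := hbound.const_mul 2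
      exact ((eLpNorm_lt_top_iff_lintegral_rpow_enorm_lt_top hq0 hqtop).1 this.eLpNorm_lt_top).ne
    · filter_upwards [hlim] with x hx
      have h1 : Tendsto (fun n => ‖fn n x - g x‖₊) atTop (𝓝 ‖g x - g x‖₊) :=
        (Tendsto.sub hx tendsto_const_nhds).nnnorm
      rw [sub_self, nnnorm_zero] at h1
      have h2 : Tendsto (fun n => (‖fn n x - g x‖₊ : ℝ≥0∞)) atTop (𝓝 0) := by
        simpa using (ENNReal.tendsto_coe.2 h1)
      simpa [ENNReal.zero_rpow_of_pos hqr] using h2.ennrpow_const q.toReal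
  have := key.ennrpow_const (1 / q.toReal)
  rw [ENNReal.zero_rpow_of_pos (by positivity)] at this
  refine this.congr fun n => ?_
  exact (eLpNorm_eq_lintegral_rpow_enorm_toReal (f := fun x => fn n x - g x) hq0 hqtop).symm

/-- Uniform local Lipschitz bound on a compact set. -/
lemma nem_unif_lip {E F : Type*} [NormedAddCommGroup E] [NormedAddCommGroup F]
    (f : E × ℝ → F)
    (hlip : ∀ e₀ : E, ∃ δ > (0 : ℝ), ∃ L > (0 : ℝ),
      ∀ e₁ e₂ : E, ‖e₁ - e₀‖ ≤ δ → ‖e₂ - e₀‖ ≤ δ →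
        ∀ x₁ x₂ : ℝ, ‖f (e₁, x₁) - f (e₂, x₂)‖ ≤ L * (‖e₁ - e₂‖ + |x₁ - x₂|))
    {K : Set E} (hK : IsCompact K) :
    ∃ δ₀ > (0 : ℝ), ∃ L₀ > (0 : ℝ), ∀ e₀ ∈ K, ∀ e₁ e₂ : E,
      ‖e₁ - e₀‖ ≤ δ₀ → ‖e₂ - e₀‖ ≤ δ₀ →
        ∀ x₁ x₂ : ℝ, ‖f (e₁, x₁) - f (e₂, x₂)‖ ≤ L₀ * (‖e₁ - e₂‖ + |x₁ - x₂|) := by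
  choose δ hδ L hL hb using hlip
  obtain ⟨t, -, hcov⟩ := hK.elim_nhds_subcover (fun e => Metric.ball e (δ e / 2))
    (fun e _ => Metric.ball_mem_nhds e (by linarith [hδ e]))
  rcases t.eq_empty_or_nonempty with rfl | ht
  · refine ⟨1, one_pos, 1, one_pos, fun e₀ he₀ => absurd (hcov he₀) (by simp)⟩
  refine ⟨t.inf' ht (fun e => δ e / 2), ?_, t.sup' ht L, ?_, ?_⟩
  · exact (Finset.lt_inf'_iff ht).2 fun e _ => by linarith [hδ e]
  · obtain ⟨e, he⟩ := ht
    exact lt_of_lt_of_le (hL e) (Finset.le_sup' L he)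
  · intro e₀ he₀ e₁ e₂ h1 h2 x₁ x₂
    obtain ⟨i, hit, hi⟩ := Set.mem_iUnion₂.1 (hcov he₀)
    have hinf : t.inf' ht (fun e => δ e / 2) ≤ δ i / 2 := Finset.inf'_le _ hit
    have hd : dist e₀ i < δ i / 2 := Metric.mem_ball.1 hi
    have key : ∀ e : E, ‖e - e₀‖ ≤ t.inf' ht (fun e => δ e / 2) → ‖e - i‖ ≤ δ i := by
      intro e he
      have : ‖e - i‖ ≤ ‖e - e₀‖ + ‖e₀ - i‖ := norm_sub_le_norm_sub_add_norm_sub e e₀ i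
      rw [← dist_eq_norm e₀ i] at this
      linarith
    calc ‖f (e₁, x₁) - f (e₂, x₂)‖ ≤ L i * (‖e₁ - e₂‖ + |x₁ - x₂|) :=
          hb i e₁ e₂ (key e₁ h1) (key e₂ h2) x₁ x₂
    _ ≤ t.sup' ht L * (‖e₁ - e₂‖ + |x₁ - x₂|) :=
        mul_le_mul_of_nonneg_right (Finset.le_sup' L hit) (by positivity)

/-- `Lp` convergence of a family along `𝓝[>] 0` by dominated convergence. -/
lemma nem_family_tendsto {α G : Type*} [MeasurableSpace α] {μ : Measure α}
    [NormedAddCommGroup G] {q : ℝ≥0∞} (hq0 : q ≠ 0) (hqtop : q ≠ ⊤)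
    (Ψ : ℝ → α → G) (g : α → G) (bound : α → ℝ) {ε : ℝ} (hε : 0 < ε)
    (hasm : ∀ lam, AEStronglyMeasurable (Ψ lam) μ)
    (hbmem : MemLp bound q μ)
    (hb : ∀ lam : ℝ, 0 < lam → lam < ε → ∀ᵐ t ∂μ, ‖Ψ lam t‖ ≤ bound t)
    (hlim : ∀ᵐ t ∂μ, Tendsto (fun lam => Ψ lam t) (𝓝[>] (0:ℝ)) (𝓝 (g t))) :
    Tendsto (fun lam => eLpNorm (fun t => Ψ lam t - g t) q μ) (𝓝[>] (0:ℝ)) (𝓝 0) := by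
  rw [tendsto_iff_seq_tendsto]
  intro x hx
  obtain ⟨N, hN⟩ : ∃ N, ∀ n ≥ N, x n ∈ Set.Ioo (0:ℝ) ε :=
    eventually_atTop.1 (hx (Ioo_mem_nhdsGT_of_mem ⟨le_rfl, hε⟩))
  have : Tendsto (fun n : ℕ => eLpNorm (fun t => Ψ (x (n + N)) t - g t) q μ) atTop (𝓝 0) := by
    refine nem_dct hq0 hqtop (fun n => hasm _) hbmem (fun n => ?_) ?_
    · obtain ⟨h1, h2⟩ := hN (n + N) (Nat.le_add_left _ _)
      exact hb _ h1 h2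
    · filter_upwards [hlim] with t ht
      exact ht.comp (hx.comp (tendsto_add_atTop_nat N))
  rw [← tendsto_add_atTop_iff_nat N]
  exact this

open Classical in
/-- Package a function as an `Lp` element if possible. -/
noncomputable def toLpOrZero {α G : Type*} [MeasurableSpace α] (μ : Measure α)
    [NormedAddCommGroup G] (q : ℝ≥0∞) (g : α → G) : Lp G q μ :=
  if h : MemLp g q μ then h.toLp g else 0

lemma toLpOrZero_coe {α G : Type*} [MeasurableSpace α] {μ : Measure α}
    [NormedAddCommGroup G] {q : ℝ≥0∞} {g : α → G} (h : MemLp g q μ) :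
    (toLpOrZero μ q g : α → G) =ᵐ[μ] g := by
  classical
  rw [toLpOrZero]
  rw [dif_pos h]
  exact h.coeFn_toLp

set_option maxHeartbeats 3000000 in
set_option synthInstance.maxHeartbeats 1000000 in
theorem nemytskii_hadamard_differentiable {E F : Type*}
    [NormedAddCommGroup E] [NormedSpace ℝ E] [CompleteSpace E]
    [NormedAddCommGroup F] [NormedSpace ℝ F] [CompleteSpace F]
    (T : ℝ) (hT : 0 < T) (q : ℝ≥0∞) (hq1 : 1 < q) (hq2 : q ≠ ⊤) [Fact (1 ≤ q)]
    (M : ℝ) (hM : 0 < M)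
    (f : E × ℝ → F) (hfc : Continuous f)
    (hlip : ∀ e₀ : E, ∃ δ > (0 : ℝ), ∃ L > (0 : ℝ),
      ∀ e₁ e₂ : E, ‖e₁ - e₀‖ ≤ δ → ‖e₂ - e₀‖ ≤ δ →
        ∀ x₁ x₂ : ℝ, ‖f (e₁, x₁) - f (e₂, x₂)‖ ≤ L * (‖e₁ - e₂‖ + |x₁ - x₂|))
    (hgrowth : ∀ (e : E) (x : ℝ), ‖f (e, x)‖ ≤ M * (1 + ‖e‖ + |x|))
    (df : E × ℝ → E × ℝ → F)
    (hdf : ∀ p d : E × ℝ,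
      Tendsto (fun lam : ℝ => lam⁻¹ • (f (p + lam • d) - f p)) (𝓝[>] (0 : ℝ)) (𝓝 (df p d))) :
    ∃ Ft : C(Set.Icc (0 : ℝ) T, E) × Lp ℝ q (volume.restrict (Set.Ioc (0 : ℝ) T)) →
        Lp F q (volume.restrict (Set.Ioc (0 : ℝ) T)),
      (∀ yv : C(Set.Icc (0 : ℝ) T, E) × Lp ℝ q (volume.restrict (Set.Ioc (0 : ℝ) T)),
        (Ft yv : ℝ → F) =ᵐ[volume.restrict (Set.Ioc (0 : ℝ) T)]
          fun t => f (Set.IccExtend hT.le yv.1 t, yv.2 t)) ∧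
      ∀ yv : C(Set.Icc (0 : ℝ) T, E) × Lp ℝ q (volume.restrict (Set.Ioc (0 : ℝ) T)),
        ∃ D : C(Set.Icc (0 : ℝ) T, E) × Lp ℝ q (volume.restrict (Set.Ioc (0 : ℝ) T)) →
            Lp F q (volume.restrict (Set.Ioc (0 : ℝ) T)),
          (∀ hl : C(Set.Icc (0 : ℝ) T, E) × Lp ℝ q (volume.restrict (Set.Ioc (0 : ℝ) T)),
            (D hl : ℝ → F) =ᵐ[volume.restrict (Set.Ioc (0 : ℝ) T)]
              fun t => df (Set.IccExtend hT.le yv.1 t, yv.2 t)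
                (Set.IccExtend hT.le hl.1 t, hl.2 t)) ∧
          (∀ hl, HadamardDerivAt Ft yv hl (D hl)) ∧
          ∃ C : ℝ≥0, LipschitzWith C D := by
  classical
  set μ := volume.restrict (Set.Ioc (0 : ℝ) T) with hμdef
  have hμuniv : μ Set.univ = ENNReal.ofReal T := by
    rw [hμdef, Measure.restrict_apply_univ, Real.volume_Ioc, sub_zero]
  haveI hfin : IsFiniteMeasure μ := ⟨by rw [hμuniv]; exact ENNReal.ofReal_lt_top⟩
  have hμ0 : μ ≠ 0 := by
    rw [← Measure.measure_univ_ne_zero, hμuniv]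
    simpa [ENNReal.ofReal_eq_zero] using hT
  have hq0 : q ≠ 0 := (zero_lt_one.trans hq1).ne'
  have hq1' : (1 : ℝ≥0∞) ≤ q := hq1.le
  -- basic facts about the extension operator
  have hee_cont : ∀ z : C(Set.Icc (0:ℝ) T, E), Continuous (Set.IccExtend hT.le ⇑z) :=
    fun z => z.continuous.Icc_extend'
  have hee_le : ∀ (z : C(Set.Icc (0:ℝ) T, E)) (t : ℝ), ‖Set.IccExtend hT.le ⇑z t‖ ≤ ‖z‖ :=
    fun z t => z.norm_coe_le_norm _
  have hee_add : ∀ (a b : C(Set.Icc (0:ℝ) T, E)) (t : ℝ),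
      Set.IccExtend hT.le ⇑(a + b) t = Set.IccExtend hT.le ⇑a t + Set.IccExtend hT.le ⇑b t := by
    intro a b t; simp [Set.IccExtend]
  have hee_smul : ∀ (c : ℝ) (a : C(Set.Icc (0:ℝ) T, E)) (t : ℝ),
      Set.IccExtend hT.le ⇑(c • a) t = c • Set.IccExtend hT.le ⇑a t := by
    intro c a t; simp [Set.IccExtend]
  have hee_sub : ∀ (a b : C(Set.Icc (0:ℝ) T, E)) (t : ℝ),
      Set.IccExtend hT.le ⇑(a - b) t = Set.IccExtend hT.le ⇑a t - Set.IccExtend hT.le ⇑b t := by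
    intro a b t; simp [Set.IccExtend]
  -- measurability helper
  have asm_pair : ∀ (Y : ℝ → E), Continuous Y → ∀ w : ℝ → ℝ, AEStronglyMeasurable w μ →
      AEStronglyMeasurable (fun t => f (Y t, w t)) μ := fun Y hY w hw =>
    hfc.comp_aestronglyMeasurable (hY.aestronglyMeasurable.prodMk hw)
  -- membership of the Nemytskii image
  have memf : ∀ (z : C(Set.Icc (0:ℝ) T, E)) (w : Lp ℝ q μ),
      MemLp (fun t => f (Set.IccExtend hT.le ⇑z t, w t)) q μ := by
    intro z w
    have hdom : MemLp (fun t => M * (1 + ‖z‖) + M * ‖w t‖) q μ :=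
      (memLp_const (M * (1 + ‖z‖))).add (((Lp.memLp w).norm).const_mul M)
    refine MemLp.of_le hdom (asm_pair _ (hee_cont z) _ (Lp.aestronglyMeasurable w)) ?_
    refine Eventually.of_forall fun t => ?_
    have h1 := hgrowth (Set.IccExtend hT.le ⇑z t) (w t)
    have h2 := hee_le z t
    have h3 : |(w : ℝ → ℝ) t| = ‖(w : ℝ → ℝ) t‖ := (Real.norm_eq_abs _).symm
    refine le_trans ?_ (le_abs_self _)
    rw [← h3]
    nlinarith [abs_nonneg ((w : ℝ → ℝ) t), hM.le]
  refine ⟨fun z => toLpOrZero μ q (fun t => f (Set.IccExtend hT.le ⇑z.1 t, z.2 t)),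
    fun z => toLpOrZero_coe (memf z.1 z.2), ?_⟩
  intro yv
  -- uniform Lipschitz constant along the (compact) trajectory
  obtain ⟨δ₀, hδ₀, L₀, hL₀, hKlip⟩ := nem_unif_lip f hlip
    (K := Set.range (Set.IccExtend hT.le ⇑yv.1))
    (by rw [Set.IccExtend_range]; exact isCompact_range yv.1.continuous)
  -- the directional derivative of `f` vanishes in direction `0`
  have df_zero : ∀ pt : E × ℝ, df pt 0 = 0 := by
    intro pt
    have h1 := hdf pt 0
    have h2 : (fun lam : ℝ => lam⁻¹ • (f (pt + lam • (0 : E × ℝ)) - f pt)) = fun _ => (0 : F) := by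
      funext lam; simp
    rw [h2] at h1
    exact (tendsto_nhds_unique h1 tendsto_const_nhds)
  -- Lipschitz continuity of the directional derivative along the trajectory
  have hdf_lip : ∀ (t : ℝ) (d d' : E × ℝ),
      ‖df (Set.IccExtend hT.le ⇑yv.1 t, yv.2 t) d - df (Set.IccExtend hT.le ⇑yv.1 t, yv.2 t) d'‖
        ≤ L₀ * (‖d.1 - d'.1‖ + |d.2 - d'.2|) := by
    intro t d d'
    have htend := Tendsto.sub (hdf (Set.IccExtend hT.le ⇑yv.1 t, yv.2 t) d)
      (hdf (Set.IccExtend hT.le ⇑yv.1 t, yv.2 t) d')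
    refine le_of_tendsto htend.norm ?_
    have hev : Set.Ioo (0:ℝ) (δ₀ / (‖d.1‖ + ‖d'.1‖ + 1)) ∈ 𝓝[>] (0:ℝ) :=
      Ioo_mem_nhdsGT_of_mem ⟨le_rfl, by positivity⟩
    filter_upwards [hev] with lam hlam
    obtain ⟨hl1, hl2⟩ := hlam
    have hne : lam ≠ 0 := hl1.ne'
    have hcollapse : lam⁻¹ • (f ((Set.IccExtend hT.le ⇑yv.1 t, (yv.2 : ℝ → ℝ) t) + lam • d)
          - f (Set.IccExtend hT.le ⇑yv.1 t, yv.2 t))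
        - lam⁻¹ • (f ((Set.IccExtend hT.le ⇑yv.1 t, (yv.2 : ℝ → ℝ) t) + lam • d')
          - f (Set.IccExtend hT.le ⇑yv.1 t, yv.2 t))
        = lam⁻¹ • (f ((Set.IccExtend hT.le ⇑yv.1 t, (yv.2 : ℝ → ℝ) t) + lam • d)
          - f ((Set.IccExtend hT.le ⇑yv.1 t, (yv.2 : ℝ → ℝ) t) + lam • d')) := by
      rw [← smul_sub, sub_sub_sub_cancel_right]
    rw [hcollapse, norm_smul, Real.norm_eq_abs, abs_inv, abs_of_pos hl1]
    have hlipap := hKlip (Set.IccExtend hT.le ⇑yv.1 t) ⟨t, rfl⟩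
      (Set.IccExtend hT.le ⇑yv.1 t + lam • d.1) (Set.IccExtend hT.le ⇑yv.1 t + lam • d'.1)
      (by
        rw [add_sub_cancel_left, norm_smul, Real.norm_eq_abs, abs_of_pos hl1]
        have hS : lam * (‖d.1‖ + ‖d'.1‖ + 1) < δ₀ := (lt_div_iff₀ (by positivity)).mp hl2
        nlinarith [norm_nonneg d.1, norm_nonneg d'.1])
      (by
        rw [add_sub_cancel_left, norm_smul, Real.norm_eq_abs, abs_of_pos hl1]
        have hS : lam * (‖d.1‖ + ‖d'.1‖ + 1) < δ₀ := (lt_div_iff₀ (by positivity)).mp hl2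
        nlinarith [norm_nonneg d.1, norm_nonneg d'.1])
      ((yv.2 : ℝ → ℝ) t + lam • d.2) ((yv.2 : ℝ → ℝ) t + lam • d'.2)
    have harg1 : (Set.IccExtend hT.le ⇑yv.1 t, (yv.2 : ℝ → ℝ) t) + lam • d
        = (Set.IccExtend hT.le ⇑yv.1 t + lam • d.1, (yv.2 : ℝ → ℝ) t + lam • d.2) := rfl
    have harg2 : (Set.IccExtend hT.le ⇑yv.1 t, (yv.2 : ℝ → ℝ) t) + lam • d'
        = (Set.IccExtend hT.le ⇑yv.1 t + lam • d'.1, (yv.2 : ℝ → ℝ) t + lam • d'.2) := rfl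
    rw [harg1, harg2]
    have heq1 : Set.IccExtend hT.le ⇑yv.1 t + lam • d.1 - (Set.IccExtend hT.le ⇑yv.1 t + lam • d'.1)
        = lam • (d.1 - d'.1) := by rw [smul_sub]; abel
    have heq2 : (yv.2 : ℝ → ℝ) t + lam • d.2 - ((yv.2 : ℝ → ℝ) t + lam • d'.2)
        = lam * (d.2 - d'.2) := by simp only [smul_eq_mul]; ring
    rw [heq1, heq2] at hlipap
    rw [norm_smul, Real.norm_eq_abs, abs_of_pos hl1, abs_mul, abs_of_pos hl1] at hlipap
    calc lam⁻¹ * ‖f (Set.IccExtend hT.le ⇑yv.1 t + lam • d.1, (yv.2 : ℝ → ℝ) t + lam • d.2)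
          - f (Set.IccExtend hT.le ⇑yv.1 t + lam • d'.1, (yv.2 : ℝ → ℝ) t + lam • d'.2)‖
        ≤ lam⁻¹ * (L₀ * (lam * ‖d.1 - d'.1‖ + lam * |d.2 - d'.2|)) :=
          mul_le_mul_of_nonneg_left hlipap (by positivity)
      _ = L₀ * (‖d.1 - d'.1‖ + |d.2 - d'.2|) := by field_simp
  have hdf_bound : ∀ (t : ℝ) (d : E × ℝ),
      ‖df (Set.IccExtend hT.le ⇑yv.1 t, yv.2 t) d‖ ≤ L₀ * (‖d.1‖ + |d.2|) := by
    intro t d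
    simpa [df_zero] using hdf_lip t d 0
  -- sequence tending to `0` from the right
  have hseq : Tendsto (fun n : ℕ => ((n : ℝ) + 1)⁻¹) atTop (𝓝[>] (0:ℝ)) := by
    refine tendsto_nhdsWithin_of_tendsto_nhds_of_eventually_within _ ?_ ?_
    · simpa only [one_div] using (tendsto_one_div_add_atTop_nhds_zero_nat :
        Tendsto (fun n : ℕ => 1 / ((n : ℝ) + 1)) atTop (𝓝 0))
    · exact Eventually.of_forall fun n => Set.mem_Ioi.2 (by positivity)
  -- measurability of the pointwise derivative
  have asm_g : ∀ hl : C(Set.Icc (0:ℝ) T, E) × Lp ℝ q μ,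
      AEStronglyMeasurable
        (fun t => df (Set.IccExtend hT.le ⇑yv.1 t, yv.2 t)
          (Set.IccExtend hT.le ⇑hl.1 t, hl.2 t)) μ := by
    intro hl
    have key : ∀ n : ℕ, AEStronglyMeasurable (fun t : ℝ => (((n : ℝ) + 1)⁻¹)⁻¹ •
        (f (Set.IccExtend hT.le ⇑yv.1 t + ((n : ℝ) + 1)⁻¹ • Set.IccExtend hT.le ⇑hl.1 t,
            (yv.2 : ℝ → ℝ) t + ((n : ℝ) + 1)⁻¹ • (hl.2 : ℝ → ℝ) t)
          - f (Set.IccExtend hT.le ⇑yv.1 t, yv.2 t))) μ := by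
      intro n
      refine AEStronglyMeasurable.const_smul (AEStronglyMeasurable.sub ?_ ?_) _
      · exact asm_pair _ ((hee_cont yv.1).add ((hee_cont hl.1).const_smul _)) _
          ((Lp.aestronglyMeasurable yv.2).add ((Lp.aestronglyMeasurable hl.2).const_smul' _))
      · exact asm_pair _ (hee_cont yv.1) _ (Lp.aestronglyMeasurable yv.2)
    have lim : ∀ᵐ t ∂μ, Tendsto (fun n : ℕ => (((n : ℝ) + 1)⁻¹)⁻¹ •
        (f (Set.IccExtend hT.le ⇑yv.1 t + ((n : ℝ) + 1)⁻¹ • Set.IccExtend hT.le ⇑hl.1 t,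
            (yv.2 : ℝ → ℝ) t + ((n : ℝ) + 1)⁻¹ • (hl.2 : ℝ → ℝ) t)
          - f (Set.IccExtend hT.le ⇑yv.1 t, yv.2 t))) atTop
        (𝓝 (df (Set.IccExtend hT.le ⇑yv.1 t, yv.2 t)
          (Set.IccExtend hT.le ⇑hl.1 t, hl.2 t))) := by
      refine Eventually.of_forall fun t => ?_
      have h := (hdf (Set.IccExtend hT.le ⇑yv.1 t, (yv.2 : ℝ → ℝ) t)
        (Set.IccExtend hT.le ⇑hl.1 t, (hl.2 : ℝ → ℝ) t)).comp hseq
      simpa only [Function.comp_def, Prod.smul_mk, Prod.mk_add_mk, smul_eq_mul] using h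
    exact aestronglyMeasurable_of_tendsto_ae atTop key lim
  -- membership of the derivative
  have memD : ∀ hl : C(Set.Icc (0:ℝ) T, E) × Lp ℝ q μ,
      MemLp (fun t => df (Set.IccExtend hT.le ⇑yv.1 t, yv.2 t)
        (Set.IccExtend hT.le ⇑hl.1 t, hl.2 t)) q μ := by
    intro hl
    have hdom : MemLp (fun t => L₀ * ‖hl.1‖ + L₀ * ‖hl.2 t‖) q μ :=
      (memLp_const (L₀ * ‖hl.1‖)).add (((Lp.memLp hl.2).norm).const_mul L₀)
    refine MemLp.of_le hdom (asm_g hl) (Eventually.of_forall fun t => ?_)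
    have h1 := hdf_bound t (Set.IccExtend hT.le ⇑hl.1 t, hl.2 t)
    have h2 := hee_le hl.1 t
    refine le_trans ?_ (le_abs_self _)
    have h3 : |(hl.2 : ℝ → ℝ) t| = ‖(hl.2 : ℝ → ℝ) t‖ := (Real.norm_eq_abs _).symm
    rw [← h3]
    nlinarith [abs_nonneg ((hl.2 : ℝ → ℝ) t), hL₀.le]
  refine ⟨fun hl => toLpOrZero μ q (fun t => df (Set.IccExtend hT.le ⇑yv.1 t, yv.2 t)
      (Set.IccExtend hT.le ⇑hl.1 t, hl.2 t)), fun hl => toLpOrZero_coe (memD hl), ?_, ?_⟩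
  · -- Hadamard differentiability
    intro hl
    -- Lipschitz bound for difference quotients near the trajectory
    have hquot : ∀ lam : ℝ, 0 < lam → ∀ (t : ℝ) (A A' : E) (B B' : ℝ),
        ‖A - Set.IccExtend hT.le ⇑yv.1 t‖ ≤ δ₀ → ‖A' - Set.IccExtend hT.le ⇑yv.1 t‖ ≤ δ₀ →
        ‖lam⁻¹ • (f (A, B) - f (A', B'))‖
          ≤ L₀ * (lam⁻¹ * ‖A - A'‖ + lam⁻¹ * |B - B'|) := by
      intro lam hlam t A A' B B' h1 h2
      rw [norm_smul, Real.norm_eq_abs, abs_inv, abs_of_pos hlam]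
      have hlp := hKlip (Set.IccExtend hT.le ⇑yv.1 t) ⟨t, rfl⟩ A A' h1 h2 B B'
      calc lam⁻¹ * ‖f (A, B) - f (A', B')‖
          ≤ lam⁻¹ * (L₀ * (‖A - A'‖ + |B - B'|)) :=
            mul_le_mul_of_nonneg_left hlp (by positivity)
        _ = L₀ * (lam⁻¹ * ‖A - A'‖ + lam⁻¹ * |B - B'|) := by ring
    have main : ∀ r : ℝ → C(Set.Icc (0:ℝ) T, E) × Lp ℝ q μ,
        Tendsto (fun lam : ℝ => lam⁻¹ • r lam) (𝓝[>] (0:ℝ)) (𝓝 0) →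
        Tendsto (fun lam : ℝ => lam⁻¹ •
            (toLpOrZero μ q (fun t => f (Set.IccExtend hT.le ⇑(yv + lam • hl + r lam).1 t,
                (yv + lam • hl + r lam).2 t))
              - toLpOrZero μ q (fun t => f (Set.IccExtend hT.le ⇑yv.1 t, yv.2 t))))
          (𝓝[>] (0:ℝ))
          (𝓝 (toLpOrZero μ q (fun t => df (Set.IccExtend hT.le ⇑yv.1 t, yv.2 t)
            (Set.IccExtend hT.le ⇑hl.1 t, hl.2 t)))) := by
      intro r hr
      have hu1 : Tendsto (fun lam : ℝ => ‖(lam⁻¹ • r lam).1‖) (𝓝[>] (0:ℝ)) (𝓝 0) := by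
        have h := ((continuous_fst.tendsto (0 : C(Set.Icc (0:ℝ) T, E) × Lp ℝ q μ)).comp hr).norm
        simpa using h
      have hu2 : Tendsto (fun lam : ℝ => ‖(lam⁻¹ • r lam).2‖) (𝓝[>] (0:ℝ)) (𝓝 0) := by
        have h := ((continuous_snd.tendsto (0 : C(Set.Icc (0:ℝ) T, E) × Lp ℝ q μ)).comp hr).norm
        simpa using h
      -- the two pointwise families
      set ψ : ℝ → ℝ → F := fun lam t => lam⁻¹ •
        (f (Set.IccExtend hT.le ⇑yv.1 t + lam • Set.IccExtend hT.le ⇑hl.1 t,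
            (yv.2 : ℝ → ℝ) t + lam • (hl.2 : ℝ → ℝ) t)
          - f (Set.IccExtend hT.le ⇑yv.1 t, yv.2 t)) with hψdef
      set φ : ℝ → ℝ → F := fun lam t => lam⁻¹ •
        (f (Set.IccExtend hT.le ⇑yv.1 t + lam • Set.IccExtend hT.le ⇑hl.1 t
              + Set.IccExtend hT.le ⇑(r lam).1 t,
            (yv.2 : ℝ → ℝ) t + lam • (hl.2 : ℝ → ℝ) t + ((r lam).2 : ℝ → ℝ) t)
          - f (Set.IccExtend hT.le ⇑yv.1 t, yv.2 t)) with hφdef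
      have asmψ : ∀ lam : ℝ, AEStronglyMeasurable (ψ lam) μ := by
        intro lam
        rw [hψdef]
        refine AEStronglyMeasurable.const_smul' (AEStronglyMeasurable.sub ?_ ?_) _
        · exact asm_pair _ ((hee_cont yv.1).add ((hee_cont hl.1).const_smul lam)) _
            ((Lp.aestronglyMeasurable yv.2).add
              ((Lp.aestronglyMeasurable hl.2).const_smul' lam))
        · exact asm_pair _ (hee_cont yv.1) _ (Lp.aestronglyMeasurable yv.2)
      have asmφ : ∀ lam : ℝ, AEStronglyMeasurable (φ lam) μ := by
        intro lam
        rw [hφdef]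
        refine AEStronglyMeasurable.const_smul' (AEStronglyMeasurable.sub ?_ ?_) _
        · exact asm_pair _ (((hee_cont yv.1).add ((hee_cont hl.1).const_smul lam)).add
              (hee_cont (r lam).1)) _
            (((Lp.aestronglyMeasurable yv.2).add
              ((Lp.aestronglyMeasurable hl.2).const_smul' lam)).add
              (Lp.aestronglyMeasurable (r lam).2))
        · exact asm_pair _ (hee_cont yv.1) _ (Lp.aestronglyMeasurable yv.2)
      -- part A : the directional difference quotient converges in `L^q`
      have hA : Tendsto (fun lam => eLpNorm (fun t => ψ lam t
          - df (Set.IccExtend hT.le ⇑yv.1 t, yv.2 t)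
            (Set.IccExtend hT.le ⇑hl.1 t, hl.2 t)) q μ) (𝓝[>] (0:ℝ)) (𝓝 0) := by
        refine nem_family_tendsto hq0 hq2 ψ _ (fun t => L₀ * ‖hl.1‖ + L₀ * ‖hl.2 t‖)
          (by positivity : (0:ℝ) < δ₀ / (‖hl.1‖ + 1)) asmψ
          ((memLp_const (L₀ * ‖hl.1‖)).add (((Lp.memLp hl.2).norm).const_mul L₀)) ?_ ?_
        · intro lam hlam hlam2
          refine Eventually.of_forall fun t => ?_
          rw [hψdef]
          have hb := hquot lam hlam t
            (Set.IccExtend hT.le ⇑yv.1 t + lam • Set.IccExtend hT.le ⇑hl.1 t)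
            (Set.IccExtend hT.le ⇑yv.1 t)
            ((yv.2 : ℝ → ℝ) t + lam • (hl.2 : ℝ → ℝ) t) ((yv.2 : ℝ → ℝ) t)
            (by
              rw [add_sub_cancel_left, norm_smul, Real.norm_eq_abs, abs_of_pos hlam]
              have h1 : lam * (‖hl.1‖ + 1) < δ₀ := (lt_div_iff₀ (by positivity)).mp hlam2
              nlinarith [hee_le hl.1 t, norm_nonneg (Set.IccExtend hT.le ⇑hl.1 t),
                ContinuousMap.norm_coe_le_norm hl.1, norm_nonneg hl.1])
            (by simpa using hδ₀.le)
          refine le_trans hb ?_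
          rw [add_sub_cancel_left, add_sub_cancel_left, norm_smul, Real.norm_eq_abs,
            abs_of_pos hlam]
          have h2 : |lam • (hl.2 : ℝ → ℝ) t| = lam * |(hl.2 : ℝ → ℝ) t| := by
            rw [smul_eq_mul, abs_mul, abs_of_pos hlam]
          rw [h2]
          have h3 : lam⁻¹ * (lam * ‖Set.IccExtend hT.le ⇑hl.1 t‖) = ‖Set.IccExtend hT.le ⇑hl.1 t‖ := by
            field_simp
          have h4 : lam⁻¹ * (lam * |(hl.2 : ℝ → ℝ) t|) = |(hl.2 : ℝ → ℝ) t| := by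
            field_simp
          rw [h3, h4]
          have h5 := hee_le hl.1 t
          have h6 : |(hl.2 : ℝ → ℝ) t| = ‖(hl.2 : ℝ → ℝ) t‖ := rfl
          nlinarith [hL₀.le, abs_nonneg ((hl.2 : ℝ → ℝ) t)]
        · refine Eventually.of_forall fun t => ?_
          have h := hdf (Set.IccExtend hT.le ⇑yv.1 t, (yv.2 : ℝ → ℝ) t)
            (Set.IccExtend hT.le ⇑hl.1 t, (hl.2 : ℝ → ℝ) t)
          rw [hψdef]
          simpa only [Prod.smul_mk, Prod.mk_add_mk] using h
      -- part B : the remainder converges to zero in `L^q`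
      have hBbound : ∀ᶠ lam in 𝓝[>] (0:ℝ),
          eLpNorm (fun t => φ lam t - ψ lam t) q μ
            ≤ ENNReal.ofReal L₀ * (μ Set.univ ^ q.toReal⁻¹ *
                ENNReal.ofReal ‖(lam⁻¹ • r lam).1‖ + ENNReal.ofReal ‖(lam⁻¹ • r lam).2‖) := by
        have ev1 : ∀ᶠ lam in 𝓝[>] (0:ℝ),
            lam ∈ Set.Ioo (0:ℝ) (min 1 (δ₀ / (2 * (‖hl.1‖ + 1)))) :=
          Ioo_mem_nhdsGT_of_mem ⟨le_rfl, by positivity⟩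
        have ev2 : ∀ᶠ lam in 𝓝[>] (0:ℝ), ‖(lam⁻¹ • r lam).1‖ < δ₀ / 2 :=
          hu1.eventually (gt_mem_nhds (by positivity))
        filter_upwards [ev1, ev2] with lam hlam hr1
        obtain ⟨hpos, hsmall⟩ := hlam
        have hlam1 : lam < 1 := lt_of_lt_of_le hsmall (min_le_left _ _)
        have hlam2 : lam < δ₀ / (2 * (‖hl.1‖ + 1)) := lt_of_lt_of_le hsmall (min_le_right _ _)
        have hlamh : lam * ‖hl.1‖ ≤ δ₀ / 2 := by
          have := (lt_div_iff₀ (by positivity : (0:ℝ) < 2 * (‖hl.1‖ + 1))).mp hlam2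
          nlinarith [norm_nonneg hl.1]
        have hrfst : ∀ s : ℝ, ‖Set.IccExtend hT.le ⇑(r lam).1 s‖ ≤ δ₀ / 2 := by
          intro s
          have hc : (r lam).1 = lam • ((lam⁻¹ • r lam).1) := by
            have : (lam⁻¹ • r lam).1 = lam⁻¹ • (r lam).1 := rfl
            rw [this, smul_inv_smul₀ hpos.ne']
          have he : Set.IccExtend hT.le ⇑(r lam).1 s
              = lam • Set.IccExtend hT.le ⇑((lam⁻¹ • r lam).1) s := by
            rw [hc, hee_smul]
          rw [he, norm_smul, Real.norm_eq_abs, abs_of_pos hpos]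
          have hb := hee_le ((lam⁻¹ • r lam).1) s
          nlinarith [norm_nonneg (Set.IccExtend hT.le ⇑((lam⁻¹ • r lam).1) s),
            norm_nonneg ((lam⁻¹ • r lam).1)]
        -- pointwise bound
        have hptw : ∀ t : ℝ, ‖φ lam t - ψ lam t‖ ≤
            ‖(L₀ • fun s : ℝ => ‖lam⁻¹ • Set.IccExtend hT.le ⇑(r lam).1 s‖
              + ‖lam⁻¹ • ((r lam).2 : ℝ → ℝ) s‖) t‖ := by
          intro t
          refine le_trans ?_ (le_abs_self _)
          have hcollapse : φ lam t - ψ lam t = lam⁻¹ •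
              (f (Set.IccExtend hT.le ⇑yv.1 t + lam • Set.IccExtend hT.le ⇑hl.1 t
                    + Set.IccExtend hT.le ⇑(r lam).1 t,
                  (yv.2 : ℝ → ℝ) t + lam • (hl.2 : ℝ → ℝ) t + ((r lam).2 : ℝ → ℝ) t)
                - f (Set.IccExtend hT.le ⇑yv.1 t + lam • Set.IccExtend hT.le ⇑hl.1 t,
                  (yv.2 : ℝ → ℝ) t + lam • (hl.2 : ℝ → ℝ) t)) := by
            rw [hφdef, hψdef]
            dsimp only
            rw [← smul_sub, sub_sub_sub_cancel_right]
          rw [hcollapse]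
          have hb := hquot lam hpos t
            (Set.IccExtend hT.le ⇑yv.1 t + lam • Set.IccExtend hT.le ⇑hl.1 t
              + Set.IccExtend hT.le ⇑(r lam).1 t)
            (Set.IccExtend hT.le ⇑yv.1 t + lam • Set.IccExtend hT.le ⇑hl.1 t)
            ((yv.2 : ℝ → ℝ) t + lam • (hl.2 : ℝ → ℝ) t + ((r lam).2 : ℝ → ℝ) t)
            ((yv.2 : ℝ → ℝ) t + lam • (hl.2 : ℝ → ℝ) t)
            (by
              have heq : Set.IccExtend hT.le ⇑yv.1 t + lam • Set.IccExtend hT.le ⇑hl.1 t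
                  + Set.IccExtend hT.le ⇑(r lam).1 t - Set.IccExtend hT.le ⇑yv.1 t
                  = lam • Set.IccExtend hT.le ⇑hl.1 t + Set.IccExtend hT.le ⇑(r lam).1 t := by
                abel
              rw [heq]
              refine le_trans (norm_add_le _ _) ?_
              rw [norm_smul, Real.norm_eq_abs, abs_of_pos hpos]
              have b1 : lam * ‖Set.IccExtend hT.le ⇑hl.1 t‖ ≤ lam * ‖hl.1‖ :=
                mul_le_mul_of_nonneg_left (hee_le hl.1 t) hpos.le
              have b2 := hrfst t
              linarith
            )
            (by
              rw [add_sub_cancel_left, norm_smul, Real.norm_eq_abs, abs_of_pos hpos]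
              have b1 : lam * ‖Set.IccExtend hT.le ⇑hl.1 t‖ ≤ lam * ‖hl.1‖ :=
                mul_le_mul_of_nonneg_left (hee_le hl.1 t) hpos.le
              linarith)
          refine le_trans hb ?_
          have e1 : Set.IccExtend hT.le ⇑yv.1 t + lam • Set.IccExtend hT.le ⇑hl.1 t
              + Set.IccExtend hT.le ⇑(r lam).1 t
              - (Set.IccExtend hT.le ⇑yv.1 t + lam • Set.IccExtend hT.le ⇑hl.1 t)
              = Set.IccExtend hT.le ⇑(r lam).1 t := by abel
          have e2 : (yv.2 : ℝ → ℝ) t + lam • (hl.2 : ℝ → ℝ) t + ((r lam).2 : ℝ → ℝ) t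
              - ((yv.2 : ℝ → ℝ) t + lam • (hl.2 : ℝ → ℝ) t) = ((r lam).2 : ℝ → ℝ) t := by ring
          rw [e1, e2]
          simp only [Pi.add_apply, Pi.smul_apply, smul_eq_mul]
          have hn1 : ‖lam⁻¹ • Set.IccExtend hT.le ⇑(r lam).1 t‖
              = lam⁻¹ * ‖Set.IccExtend hT.le ⇑(r lam).1 t‖ := by
            rw [norm_smul, Real.norm_eq_abs, abs_inv, abs_of_pos hpos]
          have hn2 : ‖lam⁻¹ * ((r lam).2 : ℝ → ℝ) t‖
              = lam⁻¹ * |((r lam).2 : ℝ → ℝ) t| := by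
            rw [Real.norm_eq_abs, abs_mul, abs_inv, abs_of_pos hpos]
          rw [hn1, hn2]
        -- integrate the bound
        calc eLpNorm (fun t => φ lam t - ψ lam t) q μ
            ≤ eLpNorm (L₀ • fun s : ℝ => ‖lam⁻¹ • Set.IccExtend hT.le ⇑(r lam).1 s‖
              + ‖lam⁻¹ • ((r lam).2 : ℝ → ℝ) s‖) q μ :=
              eLpNorm_mono_ae (Eventually.of_forall hptw)
          _ = (‖L₀‖₊ : ℝ≥0∞) * eLpNorm (fun s : ℝ =>
                ‖lam⁻¹ • Set.IccExtend hT.le ⇑(r lam).1 s‖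
                + ‖lam⁻¹ • ((r lam).2 : ℝ → ℝ) s‖) q μ := by
              rw [eLpNorm_const_smul]
              rfl
          _ ≤ (‖L₀‖₊ : ℝ≥0∞) * (eLpNorm (fun s : ℝ =>
                ‖lam⁻¹ • Set.IccExtend hT.le ⇑(r lam).1 s‖) q μ
              + eLpNorm (fun s : ℝ => ‖lam⁻¹ • ((r lam).2 : ℝ → ℝ) s‖) q μ) := by
              refine mul_le_mul_right ?_ _
              refine eLpNorm_add_le ?_ ?_ hq1'
              · exact (((hee_cont (r lam).1).const_smul _).norm).aestronglyMeasurable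
              · exact ((Lp.aestronglyMeasurable (r lam).2).const_smul' _).norm
          _ ≤ ENNReal.ofReal L₀ * (μ Set.univ ^ q.toReal⁻¹ *
                ENNReal.ofReal ‖(lam⁻¹ • r lam).1‖ + ENNReal.ofReal ‖(lam⁻¹ • r lam).2‖) := by
              rw [← enorm_eq_nnnorm L₀, Real.enorm_eq_ofReal hL₀.le]
              refine mul_le_mul_right (add_le_add ?_ ?_) _
              · rw [eLpNorm_norm]
                refine le_trans (eLpNorm_le_of_ae_bound (C := ‖(lam⁻¹ • r lam).1‖)
                  (Eventually.of_forall fun s => ?_)) le_rfl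
                have he : lam⁻¹ • Set.IccExtend hT.le ⇑(r lam).1 s
                    = Set.IccExtend hT.le ⇑((lam⁻¹ • r lam).1) s := by
                  rw [Prod.smul_fst, hee_smul]
                rw [he]
                exact hee_le _ _
              · rw [eLpNorm_norm]
                have he : eLpNorm (fun s : ℝ => lam⁻¹ • ((r lam).2 : ℝ → ℝ) s) q μ
                    = eLpNorm (⇑((lam⁻¹ • r lam).2)) q μ := by
                  refine (eLpNorm_congr_ae ?_).symm
                  have hc := Lp.coeFn_smul (lam⁻¹) ((r lam).2)
                  filter_upwards [hc] with s hs
                  rw [Prod.smul_snd, hs]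
                  simp
                rw [he, ← ENNReal.ofReal_toReal (Lp.eLpNorm_ne_top ((lam⁻¹ • r lam).2))]
                rw [← Lp.norm_def]
      have hBtend : Tendsto (fun lam => ENNReal.ofReal L₀ * (μ Set.univ ^ q.toReal⁻¹ *
          ENNReal.ofReal ‖(lam⁻¹ • r lam).1‖ + ENNReal.ofReal ‖(lam⁻¹ • r lam).2‖))
          (𝓝[>] (0:ℝ)) (𝓝 0) := by
        have hμtop : (μ Set.univ ^ q.toReal⁻¹ : ℝ≥0∞) ≠ ⊤ :=
          ENNReal.rpow_ne_top_of_nonneg (by positivity)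
            (by rw [hμuniv]; exact ENNReal.ofReal_ne_top)
        have t1 : Tendsto (fun lam => ENNReal.ofReal ‖(lam⁻¹ • r lam).1‖) (𝓝[>] (0:ℝ)) (𝓝 0) := by
          have := ENNReal.tendsto_ofReal hu1
          simpa using this
        have t2 : Tendsto (fun lam => ENNReal.ofReal ‖(lam⁻¹ • r lam).2‖) (𝓝[>] (0:ℝ)) (𝓝 0) := by
          have := ENNReal.tendsto_ofReal hu2
          simpa using this
        have t3 := (ENNReal.Tendsto.const_mul t1 (Or.inr hμtop)).add t2
        have t4 := ENNReal.Tendsto.const_mul (a := ENNReal.ofReal L₀) (by simpa using t3)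
          (Or.inr ENNReal.ofReal_ne_top)
        simpa using t4
      have hB : Tendsto (fun lam => eLpNorm (fun t => φ lam t - ψ lam t) q μ)
          (𝓝[>] (0:ℝ)) (𝓝 0) :=
        tendsto_of_tendsto_of_tendsto_of_le_of_le' tendsto_const_nhds hBtend
          (Eventually.of_forall fun _ => zero_le) hBbound
      -- triangle inequality
      have htri : ∀ lam : ℝ, eLpNorm (fun t => φ lam t
            - df (Set.IccExtend hT.le ⇑yv.1 t, yv.2 t)
              (Set.IccExtend hT.le ⇑hl.1 t, hl.2 t)) q μ
          ≤ eLpNorm (fun t => ψ lam t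
            - df (Set.IccExtend hT.le ⇑yv.1 t, yv.2 t)
              (Set.IccExtend hT.le ⇑hl.1 t, hl.2 t)) q μ
          + eLpNorm (fun t => φ lam t - ψ lam t) q μ := by
        intro lam
        have hsum : (fun t => φ lam t
            - df (Set.IccExtend hT.le ⇑yv.1 t, yv.2 t)
              (Set.IccExtend hT.le ⇑hl.1 t, hl.2 t))
            = (fun t => (ψ lam t
              - df (Set.IccExtend hT.le ⇑yv.1 t, yv.2 t)
                (Set.IccExtend hT.le ⇑hl.1 t, hl.2 t)) + (φ lam t - ψ lam t)) := by
          funext t; abel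
        rw [hsum]
        exact eLpNorm_add_le ((asmψ lam).sub (asm_g hl)) ((asmφ lam).sub (asmψ lam)) hq1'
      have key : Tendsto (fun lam => eLpNorm (fun t => φ lam t
          - df (Set.IccExtend hT.le ⇑yv.1 t, yv.2 t)
            (Set.IccExtend hT.le ⇑hl.1 t, hl.2 t)) q μ) (𝓝[>] (0:ℝ)) (𝓝 0) := by
        refine tendsto_of_tendsto_of_tendsto_of_le_of_le' tendsto_const_nhds ?_
          (Eventually.of_forall fun _ => zero_le) (Eventually.of_forall htri)
        have := hA.add hB
        simpa using this
      -- identify the distance with the `eLpNorm` of the pointwise difference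
      have hdist : ∀ lam : ℝ, dist (lam⁻¹ •
            (toLpOrZero μ q (fun t => f (Set.IccExtend hT.le ⇑(yv + lam • hl + r lam).1 t,
                (yv + lam • hl + r lam).2 t))
              - toLpOrZero μ q (fun t => f (Set.IccExtend hT.le ⇑yv.1 t, yv.2 t))))
          (toLpOrZero μ q (fun t => df (Set.IccExtend hT.le ⇑yv.1 t, yv.2 t)
            (Set.IccExtend hT.le ⇑hl.1 t, hl.2 t)))
          = (eLpNorm (fun t => φ lam t
            - df (Set.IccExtend hT.le ⇑yv.1 t, yv.2 t)
              (Set.IccExtend hT.le ⇑hl.1 t, hl.2 t)) q μ).toReal := by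
        intro lam
        rw [Lp.dist_def]
        congr 1
        refine eLpNorm_congr_ae ?_
        have c1 := Lp.coeFn_smul (lam⁻¹)
          (toLpOrZero μ q (fun t => f (Set.IccExtend hT.le ⇑(yv + lam • hl + r lam).1 t,
              (yv + lam • hl + r lam).2 t))
            - toLpOrZero μ q (fun t => f (Set.IccExtend hT.le ⇑yv.1 t, yv.2 t)))
        have c2 := Lp.coeFn_sub
          (toLpOrZero μ q (fun t => f (Set.IccExtend hT.le ⇑(yv + lam • hl + r lam).1 t,
              (yv + lam • hl + r lam).2 t)))
          (toLpOrZero μ q (fun t => f (Set.IccExtend hT.le ⇑yv.1 t, yv.2 t)))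
        have c3 := toLpOrZero_coe (memf (yv + lam • hl + r lam).1 (yv + lam • hl + r lam).2)
        have c4 := toLpOrZero_coe (memf yv.1 yv.2)
        have c5 : ⇑((yv + lam • hl + r lam).2) =ᵐ[μ]
            fun t => (yv.2 : ℝ → ℝ) t + lam • (hl.2 : ℝ → ℝ) t + ((r lam).2 : ℝ → ℝ) t := by
          have d1 := Lp.coeFn_add (yv.2 + lam • hl.2) ((r lam).2)
          have d2 := Lp.coeFn_add yv.2 (lam • hl.2)
          have d3 := Lp.coeFn_smul lam hl.2
          filter_upwards [d1, d2, d3] with t e1 e2 e3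
          have : (yv + lam • hl + r lam).2 = yv.2 + lam • hl.2 + (r lam).2 := rfl
          rw [this, e1]
          simp only [Pi.add_apply]
          rw [e2]
          simp only [Pi.add_apply]
          rw [e3]
          simp
        have c6 := toLpOrZero_coe (memD hl)
        filter_upwards [c1, c2, c3, c4, c5, c6] with t e1 e2 e3 e4 e5 e6
        simp only [Pi.sub_apply]
        rw [e1]
        simp only [Pi.smul_apply, Pi.sub_apply]
        rw [e2]
        simp only [Pi.sub_apply]
        rw [e3, e4, e6, hφdef]
        have e7 : Set.IccExtend hT.le ⇑(yv + lam • hl + r lam).1 t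
            = Set.IccExtend hT.le ⇑yv.1 t + lam • Set.IccExtend hT.le ⇑hl.1 t
              + Set.IccExtend hT.le ⇑(r lam).1 t := by
          have : (yv + lam • hl + r lam).1 = yv.1 + lam • hl.1 + (r lam).1 := rfl
          rw [this, hee_add, hee_add, hee_smul]
        rw [e7, e5]
      rw [tendsto_iff_dist_tendsto_zero]
      have hfinal := (ENNReal.tendsto_toReal (by simp : (0:ℝ≥0∞) ≠ ⊤)).comp key
      rw [ENNReal.toReal_zero] at hfinal
      exact Tendsto.congr (fun lam => (hdist lam).symm) hfinal
    refine ⟨?_, fun r hr => main r hr⟩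
    have h0 := main (fun _ => (0 : C(Set.Icc (0:ℝ) T, E) × Lp ℝ q μ))
      (by simpa using (tendsto_const_nhds :
        Tendsto (fun _ : ℝ => (0 : C(Set.Icc (0:ℝ) T, E) × Lp ℝ q μ)) (𝓝[>] (0:ℝ)) _))
    simpa only [add_zero, DirDerivAt] using h0
  · -- Lipschitz continuity of the derivative
    have hc_ne : (μ Set.univ ^ (1 / q.toReal) : ℝ≥0∞) ≠ ⊤ :=
      ENNReal.rpow_ne_top_of_nonneg (by positivity) (by rw [hμuniv]; exact ENNReal.ofReal_ne_top)
    refine ⟨⟨L₀, hL₀.le⟩ * ((μ Set.univ ^ (1 / q.toReal)).toNNReal + 1), fun a b => ?_⟩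
    rw [Lp.edist_def]
    have h1 : eLpNorm
        (⇑(toLpOrZero μ q (fun t => df (Set.IccExtend hT.le ⇑yv.1 t, yv.2 t)
            (Set.IccExtend hT.le ⇑a.1 t, a.2 t)))
          - ⇑(toLpOrZero μ q (fun t => df (Set.IccExtend hT.le ⇑yv.1 t, yv.2 t)
            (Set.IccExtend hT.le ⇑b.1 t, b.2 t)))) q μ
        = eLpNorm (fun t => df (Set.IccExtend hT.le ⇑yv.1 t, yv.2 t)
            (Set.IccExtend hT.le ⇑a.1 t, a.2 t)
          - df (Set.IccExtend hT.le ⇑yv.1 t, yv.2 t)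
            (Set.IccExtend hT.le ⇑b.1 t, b.2 t)) q μ := by
      refine eLpNorm_congr_ae ?_
      filter_upwards [toLpOrZero_coe (memD a), toLpOrZero_coe (memD b)] with t e1 e2
      simp only [Pi.sub_apply]
      rw [e1, e2]
    rw [h1]
    have h2 : ∀ᵐ t ∂μ, ‖df (Set.IccExtend hT.le ⇑yv.1 t, yv.2 t)
            (Set.IccExtend hT.le ⇑a.1 t, a.2 t)
          - df (Set.IccExtend hT.le ⇑yv.1 t, yv.2 t)
            (Set.IccExtend hT.le ⇑b.1 t, b.2 t)‖
        ≤ ‖L₀ * ‖a.1 - b.1‖ + L₀ * ‖(a.2 - b.2 : Lp ℝ q μ) t‖‖ := by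
      filter_upwards [Lp.coeFn_sub a.2 b.2] with t hsub
      refine le_trans ?_ (le_abs_self _)
      have h3 := hdf_lip t (Set.IccExtend hT.le ⇑a.1 t, a.2 t)
        (Set.IccExtend hT.le ⇑b.1 t, b.2 t)
      have h4 : ‖Set.IccExtend hT.le ⇑a.1 t - Set.IccExtend hT.le ⇑b.1 t‖ ≤ ‖a.1 - b.1‖ := by
        rw [← hee_sub]; exact hee_le _ _
      have h5 : |(a.2 : ℝ → ℝ) t - (b.2 : ℝ → ℝ) t| = ‖(a.2 - b.2 : Lp ℝ q μ) t‖ := by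
        rw [hsub]; simp [Real.norm_eq_abs]
      rw [← h5]
      nlinarith [hL₀.le, abs_nonneg ((a.2 : ℝ → ℝ) t - (b.2 : ℝ → ℝ) t),
        norm_nonneg (Set.IccExtend hT.le ⇑a.1 t - Set.IccExtend hT.le ⇑b.1 t)]
    have hsplit : (fun t : ℝ => L₀ * ‖a.1 - b.1‖ + L₀ * ‖(a.2 - b.2 : Lp ℝ q μ) t‖)
        = (fun _ : ℝ => L₀ * ‖a.1 - b.1‖) + (L₀ • fun t : ℝ => ‖(a.2 - b.2 : Lp ℝ q μ) t‖) := rfl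
    calc eLpNorm (fun t => df (Set.IccExtend hT.le ⇑yv.1 t, yv.2 t)
            (Set.IccExtend hT.le ⇑a.1 t, a.2 t)
          - df (Set.IccExtend hT.le ⇑yv.1 t, yv.2 t)
            (Set.IccExtend hT.le ⇑b.1 t, b.2 t)) q μ
        ≤ eLpNorm (fun t : ℝ => L₀ * ‖a.1 - b.1‖ + L₀ * ‖(a.2 - b.2 : Lp ℝ q μ) t‖) q μ :=
          eLpNorm_mono_ae h2
      _ ≤ eLpNorm (fun _ : ℝ => L₀ * ‖a.1 - b.1‖) q μ
          + eLpNorm (L₀ • fun t : ℝ => ‖(a.2 - b.2 : Lp ℝ q μ) t‖) q μ := by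
          rw [hsplit]
          exact eLpNorm_add_le aestronglyMeasurable_const
            (((Lp.aestronglyMeasurable (a.2 - b.2)).norm).const_smul' L₀) hq1'
      _ = (‖L₀ * ‖a.1 - b.1‖‖₊ : ℝ≥0∞) * μ Set.univ ^ (1 / q.toReal)
          + (‖L₀‖₊ : ℝ≥0∞) * eLpNorm (⇑(a.2 - b.2)) q μ := by
          rw [eLpNorm_const _ hq0 hμ0, eLpNorm_const_smul, eLpNorm_norm]
          rfl
      _ ≤ (‖L₀‖₊ : ℝ≥0∞) * (μ Set.univ ^ (1 / q.toReal) + 1) * edist a b := by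
          have he1 : (‖L₀ * ‖a.1 - b.1‖‖₊ : ℝ≥0∞) = (‖L₀‖₊ : ℝ≥0∞) * ENNReal.ofReal ‖a.1 - b.1‖ := by
            rw [nnnorm_mul, ENNReal.coe_mul, ← enorm_eq_nnnorm ‖a.1 - b.1‖, Real.enorm_eq_ofReal (norm_nonneg _)]
          have he2 : ENNReal.ofReal ‖a.1 - b.1‖ = edist a.1 b.1 := by
            rw [edist_dist, dist_eq_norm]
          have he3 : eLpNorm (⇑(a.2 - b.2)) q μ = edist a.2 b.2 := by
            rw [Lp.edist_def]
            exact eLpNorm_congr_ae (Lp.coeFn_sub a.2 b.2)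
          rw [he1, he2, he3]
          have hm1 : edist a.1 b.1 ≤ edist a b := by
            rw [Prod.edist_eq]; exact le_max_left _ _
          have hm2 : edist a.2 b.2 ≤ edist a b := by
            rw [Prod.edist_eq]; exact le_max_right _ _
          calc (‖L₀‖₊ : ℝ≥0∞) * edist a.1 b.1 * μ Set.univ ^ (1 / q.toReal)
              + (‖L₀‖₊ : ℝ≥0∞) * edist a.2 b.2
              ≤ (‖L₀‖₊ : ℝ≥0∞) * edist a b * μ Set.univ ^ (1 / q.toReal)
                + (‖L₀‖₊ : ℝ≥0∞) * edist a b := by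
                gcongr
            _ = (‖L₀‖₊ : ℝ≥0∞) * (μ Set.univ ^ (1 / q.toReal) + 1) * edist a b := by ring
      _ = ↑(⟨L₀, hL₀.le⟩ * ((μ Set.univ ^ (1 / q.toReal)).toNNReal + 1) : ℝ≥0) * edist a b := by
          have hcoe : ((⟨L₀, hL₀.le⟩ * ((μ Set.univ ^ (1 / q.toReal)).toNNReal + 1) : ℝ≥0) : ℝ≥0∞)
              = (‖L₀‖₊ : ℝ≥0∞) * (μ Set.univ ^ (1 / q.toReal) + 1) := by
            erw [ENNReal.coe_mul, ENNReal.coe_add, ENNReal.coe_one, ENNReal.coe_toNNReal hc_ne]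
            congr 2
            rw [Real.nnnorm_of_nonneg hL₀.le]
            rfl
          rw [hcoe]
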